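/- arXiv:2407.20373 — 2 statements merged into one kernel-verified Lean document; each statement's English description precedes it below -/
import Mathlib

section
/- Let p ∈ (1,∞) and a ∈ (0,1). Define, for s,t > 0, b₀(p,a,s,t) := min{a/2, ((1/2)·((p−1)/p)·(s/t))^{p/(p−1)}}, and M(p,a,s,t) := ((p−1)/p)^{p−1}·min{b₀²/2, (b₀/2)·s^{p/(p−1)}} if p ∈ (1,2), and M(p,a,s,t) := (1/2)·((p−1)/p)^{p−1}·b₀^{p−1}·s^p if p ≥ 2. Then for every absolutely continuous function g : [0,a] → ℝ with g(0) = 0, g′ ∈ L^p(0,a) and g′ > 0 a.e. on (0,a), one has ∫₀^a x·g′(x)^{p−1}·g(x) dx ≥ M(p, a, ‖g‖_∞, ‖g′‖_{L^p(0,a)}). -/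
open MeasureTheory Set Filter Topology

open Real

lemma integral_pos_aux {μ : Measure ℝ} {f : ℝ → ℝ} (hμ : μ ≠ 0)
    (hf : Integrable f μ) (h : ∀ᵐ x ∂μ, 0 < f x) : 0 < ∫ x, f x ∂μ := by
  rw [integral_pos_iff_support_of_nonneg_ae (h.mono fun x hx => hx.le) hf]
  by_contra hcon
  push_neg at hcon
  have hs0 : μ (Function.support f) = 0 := le_antisymm hcon zero_le
  have hc0 : μ (Function.support f)ᶜ = 0 := by
    refine measure_mono_null ?_ (ae_iff.mp h)
    intro x hx
    simp only [Function.mem_support, not_not, mem_compl_iff] at hx ⊢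
    simp [hx]
  have : μ univ = 0 := by
    have := measure_union_le (μ := μ) (Function.support f) (Function.support f)ᶜ
    rwa [union_compl_self, hs0, hc0, add_zero, le_zero_iff] at this
  exact hμ (Measure.measure_univ_eq_zero.mp this)

lemma tangent_aux {u m q : ℝ} (hu : 0 < u) (hm : 0 < m) (hq : 1 ≤ q) :
    m ^ q + q * m ^ (q - 1) * (u - m) ≤ u ^ q := by
  have h1 : (-1 : ℝ) ≤ u / m - 1 := by
    have : 0 < u / m := div_pos hu hm
    linarith
  have h2 := one_add_mul_self_le_rpow_one_add h1 hq
  have h3 : (1 : ℝ) + (u / m - 1) = u / m := by ring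
  rw [h3] at h2
  have h4 := mul_le_mul_of_nonneg_left h2 (rpow_nonneg hm.le q)
  have h5 : m ^ q * (u / m) ^ q = u ^ q := by
    rw [← mul_rpow hm.le (div_pos hu hm).le, mul_div_cancel₀ _ hm.ne']
  rw [h5] at h4
  refine le_trans (le_of_eq ?_) h4
  rw [rpow_sub_one hm.ne']
  field_simp

lemma cpow_le_half {p : ℝ} (hp : 2 ≤ p) :
    ((p - 1) / p) ^ ((p - 1) + p / (p - 1)) ≤ (1 : ℝ) / 2 := by
  have hp0 : (0 : ℝ) < p := by linarith
  have hc0 : (0 : ℝ) < (p - 1) / p := div_pos (by linarith) hp0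
  have hc1 : (p - 1) / p < 1 := by rw [div_lt_one hp0]; linarith
  have hE : p ≤ (p - 1) + p / (p - 1) := by
    have h1 : (1 : ℝ) ≤ p / (p - 1) := by
      rw [le_div_iff₀ (by linarith : (0:ℝ) < p - 1)]; linarith
    linarith
  calc ((p - 1) / p) ^ ((p - 1) + p / (p - 1)) ≤ ((p - 1) / p) ^ p :=
        rpow_le_rpow_of_exponent_ge hc0 hc1.le hE
    _ ≤ Real.exp (-1) := by
        rw [rpow_def_of_pos hc0]
        apply Real.exp_le_exp.mpr
        have hlog : Real.log ((p - 1) / p) ≤ (p - 1) / p - 1 :=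
          Real.log_le_sub_one_of_pos hc0
        have h2 : (p - 1) / p - 1 = -(1 / p) := by field_simp; ring
        calc Real.log ((p - 1) / p) * p ≤ (-(1/p)) * p := by
              apply mul_le_mul_of_nonneg_right _ hp0.le
              rw [← h2]; exact hlog
          _ = -1 := by field_simp
    _ ≤ 1 / 2 := by
        rw [Real.exp_neg]
        rw [inv_le_comm₀ (Real.exp_pos 1) (by norm_num)]
        calc ((1:ℝ)/2)⁻¹ = 2 := by norm_num
          _ ≤ Real.exp 1 := by linarith [Real.add_one_le_exp 1]

lemma holder_aux {μ : Measure ℝ} {r r' : ℝ} (hrr' : r.HolderConjugate r')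
    {f h : ℝ → ℝ} (hf0 : 0 ≤ᵐ[μ] f) (hh0 : 0 ≤ᵐ[μ] h)
    (hfm : AEStronglyMeasurable f μ) (hhm : AEStronglyMeasurable h μ)
    (hfr : Integrable (fun x => f x ^ r) μ) (hhr : Integrable (fun x => h x ^ r') μ) :
    ∫ x, f x * h x ∂μ ≤ (∫ x, f x ^ r ∂μ) ^ (1/r) * (∫ x, h x ^ r' ∂μ) ^ (1/r') := by
  have key : ∀ (u : ℝ) (hu : 1 < u) (φ : ℝ → ℝ), 0 ≤ᵐ[μ] φ → AEStronglyMeasurable φ μ →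
      Integrable (fun x => φ x ^ u) μ → MemLp φ (ENNReal.ofReal u) μ := by
    intro u hu φ hφ0 hφm hφu
    have hu0 : (0:ℝ) < u := lt_trans zero_lt_one hu
    have hne : ENNReal.ofReal u ≠ 0 := by
      simp [ENNReal.ofReal_eq_zero, not_le, hu0]
    have hnt : ENNReal.ofReal u ≠ ⊤ := ENNReal.ofReal_ne_top
    rw [← memLp_norm_rpow_iff hφm hne hnt, ENNReal.div_self hne hnt,
      memLp_one_iff_integrable]
    refine hφu.congr ?_
    filter_upwards [hφ0] with x hx
    rw [Real.norm_eq_abs, abs_of_nonneg hx, ENNReal.toReal_ofReal hu0.le]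
  exact integral_mul_le_Lp_mul_Lq_of_nonneg hrr' hf0 hh0
    (key r hrr'.lt f hf0 hfm hfr) (key r' hrr'.symm.lt h hh0 hhm hhr)

lemma rpow_pred_le_aux {u p : ℝ} (hu : 0 < u) (hp : 1 < p) : u ^ (p-1) ≤ |u| ^ p + 1 := by
  rw [abs_of_pos hu]
  rcases le_total u 1 with h | h
  · have h1 : u ^ (p-1) ≤ 1 := Real.rpow_le_one hu.le h (by linarith)
    have h2 : 0 ≤ u ^ p := Real.rpow_nonneg hu.le p
    linarith
  · have h1 : u ^ (p-1) ≤ u ^ p := Real.rpow_le_rpow_of_exponent_le h (by linarith)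
    linarith

open scoped Classical in
/-- `b₀(p,a,s,t) := min { a/2, ((1/2)((p-1)/p)(s/t))^{p/(p-1)} }`. -/
noncomputable def b0 (p a s t : ℝ) : ℝ :=
  min (a / 2) ((1 / 2 * ((p - 1) / p) * (s / t)) ^ (p / (p - 1)))

open scoped Classical in
/-- The function `M(p,a,s,t)` of Proposition 4.1:
for `p ∈ (1,2)`, `M = ((p-1)/p)^{p-1} min { b₀²/2, (b₀/2) s^{p/(p-1)} }`;
for `p ≥ 2`, `M = (1/2)((p-1)/p)^{p-1} b₀^{p-1} s^p`. -/
noncomputable def Mfun (p a s t : ℝ) : ℝ :=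
  if p < 2 then
    ((p - 1) / p) ^ (p - 1) * min (b0 p a s t ^ 2 / 2) (b0 p a s t / 2 * s ^ (p / (p - 1)))
  else
    (1 / 2) * ((p - 1) / p) ^ (p - 1) * b0 p a s t ^ (p - 1) * s ^ p

set_option maxHeartbeats 1000000 in
/-- Lemma 4.4: for every absolutely continuous `g : [0,a] → ℝ` with
`g(0) = 0`, `g' ∈ L^p(0,a)` and `g' > 0` a.e. on `(0,a)`, one has
`∫₀^a x g'(x)^{p-1} g(x) dx ≥ M(p, a, ‖g‖_∞, ‖g'‖_{L^p(0,a)})`.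
Absolute continuity is encoded by `g x = ∫₀^x g'` on `[0,a]` with `g'` integrable. -/
theorem stmt10 (p a : ℝ) (hp : 1 < p) (ha : a ∈ Set.Ioo (0 : ℝ) 1)
    (g g' : ℝ → ℝ)
    (hg'int : IntegrableOn g' (Set.Ioc 0 a) volume)
    (hgAC : ∀ x ∈ Set.Icc (0 : ℝ) a, g x = ∫ t in (0 : ℝ)..x, g' t)
    (hg0 : g 0 = 0)
    (hg'Lp : IntegrableOn (fun x => |g' x| ^ p) (Set.Ioc 0 a) volume)
    (hg'pos : ∀ᵐ x ∂(volume.restrict (Set.Ioc (0 : ℝ) a)), 0 < g' x) :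
    (∫ x in Set.Ioc (0 : ℝ) a, x * g' x ^ (p - 1) * g x) ≥
      Mfun p a (sSup (g '' Set.Icc 0 a))
        ((∫ x in Set.Ioc (0 : ℝ) a, |g' x| ^ p) ^ ((1 : ℝ) / p)) := by
  rw [ge_iff_le]
  obtain ⟨ha0, ha1⟩ := ha
  have hp0 : (0:ℝ) < p := by linarith
  have hp1 : (0:ℝ) < p - 1 := by linarith
  set c : ℝ := (p - 1) / p with hc_def
  have hc0 : 0 < c := div_pos hp1 hp0
  have hc1 : c < 1 := by rw [hc_def, div_lt_one hp0]; linarith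
  set s := sSup (g '' Icc 0 a) with hs_def
  set T := ∫ x in Ioc (0:ℝ) a, |g' x| ^ p with hT_def
  set t := T ^ ((1:ℝ)/p) with ht_def
  -- basic integrability
  haveI hfin1 : IsFiniteMeasure (volume.restrict (Ioc (0:ℝ) a)) :=
    ⟨by simp [Measure.restrict_apply_univ, Real.volume_Ioc]⟩
  haveI hfin2 : ∀ u : ℝ, IsFiniteMeasure (volume.restrict (Ioc u a)) := fun u =>
    ⟨by simp [Measure.restrict_apply_univ, Real.volume_Ioc]⟩
  have hII : ∀ u v : ℝ, 0 ≤ u → v ≤ a → u ≤ v → IntervalIntegrable g' volume u v := by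
    intro u v hu hv huv
    rw [intervalIntegrable_iff_integrableOn_Ioc_of_le huv]
    exact hg'int.mono_set (fun x hx => ⟨lt_of_le_of_lt hu hx.1, le_trans hx.2 hv⟩)
  have hgdiff : ∀ x ∈ Icc (0:ℝ) a, ∀ y ∈ Icc (0:ℝ) a, x ≤ y →
      g y - g x = ∫ u in Ioc x y, g' u := by
    intro x hx y hy hxy
    rw [hgAC x hx, hgAC y hy, ← intervalIntegral.integral_of_le hxy,
      ← intervalIntegral.integral_interval_sub_left (hII 0 y le_rfl hy.2 hy.1)
        (hII 0 x le_rfl hx.2 hx.1)]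
  have hg'posIoc : ∀ u v : ℝ, 0 ≤ u → v ≤ a →
      (∀ᵐ x ∂volume.restrict (Ioc u v), 0 < g' x) := fun u v hu hv =>
    ae_restrict_of_ae_restrict_of_subset (Ioc_subset_Ioc hu hv) hg'pos
  have hmono : ∀ x ∈ Icc (0:ℝ) a, ∀ y ∈ Icc (0:ℝ) a, x ≤ y → g x ≤ g y := by
    intro x hx y hy hxy
    have h0 : 0 ≤ ∫ u in Ioc x y, g' u :=
      setIntegral_nonneg_of_ae_restrict
        ((hg'posIoc x y hx.1 hy.2).mono fun z hz => hz.le)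
    have := hgdiff x hx y hy hxy
    linarith
  have hmem_a : a ∈ Icc (0:ℝ) a := ⟨ha0.le, le_refl a⟩
  have hmem_0 : (0:ℝ) ∈ Icc (0:ℝ) a := ⟨le_refl 0, ha0.le⟩
  have hs_eq : s = g a := by
    rw [hs_def]
    apply IsGreatest.csSup_eq
    exact ⟨mem_image_of_mem g hmem_a, by
      rintro _ ⟨x, hx, rfl⟩; exact hmono x hx a hmem_a hx.2⟩
  have hrestr_ne : volume.restrict (Ioc (0:ℝ) a) ≠ 0 := by
    rw [Ne, Measure.restrict_eq_zero]
    simp only [Real.volume_Ioc, sub_zero, ENNReal.ofReal_eq_zero, not_le]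
    exact ha0
  have hga_eq : g a = ∫ u in Ioc (0:ℝ) a, g' u := by
    have := hgdiff 0 hmem_0 a hmem_a ha0.le
    rw [hg0] at this; linarith
  have hspos : 0 < s := by
    rw [hs_eq, hga_eq]
    exact integral_pos_aux hrestr_ne hg'int hg'pos
  have hTpos : 0 < T := by
    apply integral_pos_aux hrestr_ne hg'Lp
    filter_upwards [hg'pos] with x hx
    exact Real.rpow_pos_of_pos (abs_pos.mpr hx.ne') p
  have htpos : 0 < t := Real.rpow_pos_of_pos hTpos _
  have htp : t ^ p = T := by
    rw [ht_def, ← Real.rpow_mul hTpos.le, one_div, inv_mul_cancel₀ hp0.ne', Real.rpow_one]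
  -- continuity of g
  have hcontg : ContinuousOn g (Icc 0 a) := by
    have hIcc : IntegrableOn g' (uIcc (0:ℝ) a) volume := by
      rw [uIcc_of_le ha0.le, integrableOn_Icc_iff_integrableOn_Ioc]
      exact hg'int
    have h1 := intervalIntegral.continuousOn_primitive_interval hIcc
    rw [uIcc_of_le ha0.le] at h1
    exact h1.congr (fun x hx => hgAC x hx)
  -- IVT
  have hhalf_mem : s/2 ∈ g '' Icc 0 a := by
    apply intermediate_value_Icc ha0.le hcontg
    rw [hg0]
    exact ⟨by linarith, by rw [← hs_eq]; linarith⟩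
  obtain ⟨x₀, hx₀mem, hgx₀⟩ := hhalf_mem
  have hx₀0 : 0 < x₀ := by
    rcases eq_or_lt_of_le hx₀mem.1 with h | h
    · exfalso; rw [← h, hg0] at hgx₀; linarith
    · exact h
  have hx₀a : x₀ < a := by
    rcases eq_or_lt_of_le hx₀mem.2 with h | h
    · exfalso; rw [h] at hgx₀; rw [← hs_eq] at hgx₀; linarith
    · exact h
  have hx₀Icc : x₀ ∈ Icc (0:ℝ) a := hx₀mem
  -- Hölder on (0, x₀)
  have hconj1 : p.HolderConjugate (p/(p-1)) := (Real.holderConjugate_iff_eq_conjExponent hp).mpr rfl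
  have hsub0 : IntegrableOn g' (Ioc 0 x₀) volume :=
    hg'int.mono_set (Ioc_subset_Ioc_right hx₀a.le)
  have hsubLp0 : IntegrableOn (fun x => |g' x| ^ p) (Ioc 0 x₀) volume :=
    hg'Lp.mono_set (Ioc_subset_Ioc_right hx₀a.le)
  have hpos0x := hg'posIoc 0 x₀ le_rfl hx₀a.le
  have hg'm0 : AEStronglyMeasurable g' (volume.restrict (Ioc (0:ℝ) x₀)) :=
    hsub0.aestronglyMeasurable
  have hold1 : ∫ x in Ioc (0:ℝ) x₀, g' x * 1 ≤
      (∫ x in Ioc (0:ℝ) x₀, g' x ^ p) ^ (1/p) *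
      (∫ x in Ioc (0:ℝ) x₀, (1:ℝ) ^ (p/(p-1))) ^ (1/(p/(p-1))) := by
    apply holder_aux hconj1 (hpos0x.mono fun x hx => hx.le)
      (Eventually.of_forall fun x => zero_le_one)
      hg'm0 aestronglyMeasurable_const
    · refine hsubLp0.congr ?_
      filter_upwards [hpos0x] with x hx
      rw [abs_of_pos hx]
    · simp only [Real.one_rpow]
      exact integrable_const 1
  have e1 : ∫ x in Ioc (0:ℝ) x₀, g' x * 1 = s/2 := by
    simp only [mul_one]
    have := hgdiff 0 hmem_0 x₀ hx₀Icc hx₀0.le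
    rw [hg0, hgx₀] at this; linarith
  have e2 : ∫ x in Ioc (0:ℝ) x₀, g' x ^ p = ∫ x in Ioc (0:ℝ) x₀, |g' x| ^ p := by
    apply integral_congr_ae
    filter_upwards [hpos0x] with x hx
    rw [abs_of_pos hx]
  have e3 : ∫ x in Ioc (0:ℝ) x₀, (1:ℝ) ^ (p/(p-1)) = x₀ := by
    simp [Real.one_rpow, Real.volume_Ioc, ENNReal.toReal_ofReal hx₀0.le, hx₀0.le]
  have hTsub : ∫ x in Ioc (0:ℝ) x₀, |g' x| ^ p ≤ T := by
    rw [hT_def]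
    apply setIntegral_mono_set hg'Lp
      (Eventually.of_forall fun x => Real.rpow_nonneg (abs_nonneg _) p)
      (HasSubset.Subset.eventuallyLE (Ioc_subset_Ioc_right hx₀a.le))
  have hold1' : s/2 ≤ t * x₀ ^ ((p-1)/p) := by
    rw [e1, e2, e3] at hold1
    have h4 : (∫ x in Ioc (0:ℝ) x₀, |g' x| ^ p) ^ ((1:ℝ)/p) ≤ t := by
      rw [ht_def]
      exact Real.rpow_le_rpow
        (setIntegral_nonneg measurableSet_Ioc fun x _ => Real.rpow_nonneg (abs_nonneg _) p)
        hTsub (by positivity)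
    have h5 : (1:ℝ)/(p/(p-1)) = (p-1)/p := one_div_div _ _
    rw [h5] at hold1
    calc s/2 ≤ (∫ x in Ioc (0:ℝ) x₀, |g' x| ^ p) ^ (1/p) * x₀ ^ ((p-1)/p) := hold1
      _ ≤ t * x₀ ^ ((p-1)/p) :=
        mul_le_mul_of_nonneg_right h4 (Real.rpow_nonneg hx₀0.le _)
  set X := (s/(2*t)) ^ (p/(p-1)) with hX_def
  have hXpos : 0 < X := Real.rpow_pos_of_pos (by positivity) _
  have hXx₀ : X ≤ x₀ := by
    have h1 : s/(2*t) ≤ x₀ ^ ((p-1)/p) := by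
      rw [div_le_iff₀ (by positivity : (0:ℝ) < 2*t)]
      calc s = 2 * (s/2) := by ring
        _ ≤ 2 * (t * x₀ ^ ((p-1)/p)) := by linarith
        _ = x₀ ^ ((p-1)/p) * (2*t) := by ring
    calc X ≤ (x₀ ^ ((p-1)/p)) ^ (p/(p-1)) :=
          Real.rpow_le_rpow (by positivity) h1 (by positivity)
      _ = x₀ ^ (((p-1)/p) * (p/(p-1))) := (Real.rpow_mul hx₀0.le _ _).symm
      _ = x₀ := by
          rw [show ((p-1)/p) * (p/(p-1)) = 1 by field_simp, Real.rpow_one]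
  -- b0 facts
  have hb2 : b0 p a s t ≤ c ^ (p/(p-1)) * X := by
    have hbase : 1/2 * ((p-1)/p) * (s/t) = c * (s/(2*t)) := by
      rw [hc_def]; ring
    calc b0 p a s t ≤ (1/2 * ((p-1)/p) * (s/t)) ^ (p/(p-1)) := min_le_right _ _
      _ = (c * (s/(2*t))) ^ (p/(p-1)) := by rw [hbase]
      _ = c ^ (p/(p-1)) * X := Real.mul_rpow hc0.le (by positivity)
  have hb_a2 : b0 p a s t ≤ a/2 := min_le_left _ _
  have hb0pos : 0 < b0 p a s t := by
    apply lt_min (by linarith)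
    apply Real.rpow_pos_of_pos
    have hst : (0:ℝ) < s/t := by positivity
    exact mul_pos (mul_pos one_half_pos hc0) hst
  -- integrability of g'^(p-1)
  have hmeas1 : AEStronglyMeasurable (fun x => g' x ^ (p-1))
      (volume.restrict (Ioc (0:ℝ) a)) :=
    ((Real.continuous_rpow_const (by linarith : (0:ℝ) ≤ p - 1)).measurable.comp_aemeasurable
      hg'int.aemeasurable).aestronglyMeasurable
  have hI1 : IntegrableOn (fun x => g' x ^ (p-1)) (Ioc 0 a) volume := by
    apply Integrable.mono' (hg'Lp.add (integrable_const 1)) hmeas1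
    filter_upwards [hg'pos] with x hx
    rw [Real.norm_eq_abs, abs_of_pos (Real.rpow_pos_of_pos hx _)]
    exact rpow_pred_le_aux hx hp
  have hJsub : IntegrableOn (fun x => g' x ^ (p-1)) (Ioc x₀ a) volume :=
    hI1.mono_set (Ioc_subset_Ioc_left hx₀0.le)
  have hsub' : IntegrableOn g' (Ioc x₀ a) volume :=
    hg'int.mono_set (Ioc_subset_Ioc_left hx₀0.le)
  have hsubLp' : IntegrableOn (fun x => |g' x| ^ p) (Ioc x₀ a) volume :=
    hg'Lp.mono_set (Ioc_subset_Ioc_left hx₀0.le)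
  have hposx₀a := hg'posIoc x₀ a hx₀0.le le_rfl
  -- g measurable and bounded
  have hgm : AEStronglyMeasurable g (volume.restrict (Ioc (0:ℝ) a)) :=
    (hcontg.aestronglyMeasurable measurableSet_Icc).mono_measure
      (Measure.restrict_mono Ioc_subset_Icc_self le_rfl)
  have hgnn : ∀ x ∈ Icc (0:ℝ) a, 0 ≤ g x := fun x hx => by
    rw [← hg0]; exact hmono 0 hmem_0 x hx hx.1
  have hgbd : ∀ x ∈ Icc (0:ℝ) a, |g x| ≤ s := fun x hx => by
    rw [abs_of_nonneg (hgnn x hx), hs_eq]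
    exact hmono x hx a hmem_a hx.2
  have hFint : IntegrableOn (fun x => x * g' x ^ (p-1) * g x) (Ioc 0 a) volume := by
    have hbint : Integrable (fun x => a * s * (|g' x| ^ p + 1))
        (volume.restrict (Ioc (0:ℝ) a)) := (hg'Lp.add (integrable_const 1)).const_mul _
    apply Integrable.mono' hbint
      ((measurable_id.aestronglyMeasurable.mul hmeas1).mul hgm)
    filter_upwards [hg'pos, self_mem_ae_restrict measurableSet_Ioc] with x hx hxm
    have h1 : |x| ≤ a := by
      rw [abs_of_pos hxm.1]; exact hxm.2
    have h2 : |g' x ^ (p-1)| ≤ |g' x| ^ p + 1 := by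
      rw [abs_of_pos (Real.rpow_pos_of_pos hx _)]
      exact rpow_pred_le_aux hx hp
    have h3 : |g x| ≤ s := hgbd x ⟨hxm.1.le, hxm.2⟩
    show ‖x * g' x ^ (p - 1) * g x‖ ≤ a * s * (|g' x| ^ p + 1)
    rw [Real.norm_eq_abs, abs_mul, abs_mul]
    calc |x| * |g' x ^ (p-1)| * |g x| ≤ a * (|g' x| ^ p + 1) * s := by
          apply mul_le_mul _ h3 (abs_nonneg _) (by positivity)
          exact mul_le_mul h1 h2 (abs_nonneg _) ha0.le
      _ = a * s * (|g' x| ^ p + 1) := by ring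
  have hFnn : 0 ≤ᵐ[volume.restrict (Ioc (0:ℝ) a)]
      fun x => x * g' x ^ (p-1) * g x := by
    filter_upwards [hg'pos, self_mem_ae_restrict measurableSet_Ioc] with x hx hxm
    exact mul_nonneg (mul_nonneg hxm.1.le (Real.rpow_pos_of_pos hx _).le)
      (hgnn x ⟨hxm.1.le, hxm.2⟩)
  have step1 : ∫ x in Ioc x₀ a, x * g' x ^ (p-1) * g x ≤
      ∫ x in Ioc (0:ℝ) a, x * g' x ^ (p-1) * g x :=
    setIntegral_mono_set hFint hFnn
      (HasSubset.Subset.eventuallyLE (Ioc_subset_Ioc_left hx₀0.le))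
  set J := ∫ x in Ioc x₀ a, g' x ^ (p-1) with hJ_def
  have hJnn : 0 ≤ J :=
    setIntegral_nonneg_of_ae_restrict
      (hposx₀a.mono fun x hx => (Real.rpow_pos_of_pos hx _).le)
  have step2 : x₀ * (s/2) * J ≤ ∫ x in Ioc x₀ a, x * g' x ^ (p-1) * g x := by
    rw [hJ_def, ← MeasureTheory.integral_const_mul]
    apply integral_mono_ae (hJsub.const_mul _)
      (hFint.mono_set (Ioc_subset_Ioc_left hx₀0.le))
    filter_upwards [hposx₀a, self_mem_ae_restrict measurableSet_Ioc] with x hx hxm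
    have hxpos : 0 < x := lt_trans hx₀0 hxm.1
    have hgx : s/2 ≤ g x := by
      rw [← hgx₀]
      exact hmono x₀ hx₀Icc x ⟨hxpos.le, hxm.2⟩ hxm.1.le
    have hrp : 0 < g' x ^ (p-1) := Real.rpow_pos_of_pos hx _
    have h1 : x₀ * (s/2) ≤ x * g x :=
      mul_le_mul hxm.1.le hgx (by linarith) hxpos.le
    calc x₀ * (s/2) * g' x ^ (p-1) ≤ x * g x * g' x ^ (p-1) :=
          mul_le_mul_of_nonneg_right h1 hrp.le
      _ = x * g' x ^ (p-1) * g x := by ring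
  have hSint : ∫ x in Ioc x₀ a, g' x = s/2 := by
    have := hgdiff x₀ hx₀Icc a hmem_a hx₀a.le
    rw [hgx₀, ← hs_eq] at this; linarith
  -- overall reduction
  have hreduce : ∀ Z : ℝ, Z ≤ x₀ * (s/2) * J →
      Z ≤ ∫ x in Ioc (0:ℝ) a, x * g' x ^ (p-1) * g x := fun Z hZ =>
    le_trans hZ (le_trans step2 step1)
  by_cases hp2 : p < 2
  · -- case p < 2
    have h2p : (0:ℝ) < 2 - p := by linarith
    have hconj2 : ((1:ℝ)/(p-1)).HolderConjugate (1/(2-p)) :=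
      Real.holderConjugate_one_div hp1 h2p (by ring)
    have hg'meas' : AEMeasurable g' (volume.restrict (Ioc x₀ a)) := hsub'.aemeasurable
    have hfmeas : AEStronglyMeasurable (fun x => g' x ^ ((p-1)*(p-1)))
        (volume.restrict (Ioc x₀ a)) :=
      ((Real.continuous_rpow_const (mul_nonneg hp1.le hp1.le : (0:ℝ) ≤ (p-1)*(p-1))).measurable.comp_aemeasurable
        hg'meas').aestronglyMeasurable
    have hhmeas : AEStronglyMeasurable (fun x => g' x ^ (p*(2-p)))
        (volume.restrict (Ioc x₀ a)) :=
      ((Real.continuous_rpow_const (mul_nonneg hp0.le h2p.le : (0:ℝ) ≤ p*(2-p))).measurable.comp_aemeasurable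
        hg'meas').aestronglyMeasurable
    have hfint : Integrable (fun x => (g' x ^ ((p-1)*(p-1))) ^ ((1:ℝ)/(p-1)))
        (volume.restrict (Ioc x₀ a)) := by
      refine hJsub.congr ?_
      filter_upwards [hposx₀a] with x hx
      rw [← Real.rpow_mul hx.le]
      congr 1
      field_simp
    have hhint : Integrable (fun x => (g' x ^ (p*(2-p))) ^ ((1:ℝ)/(2-p)))
        (volume.restrict (Ioc x₀ a)) := by
      refine hsubLp'.congr ?_
      filter_upwards [hposx₀a] with x hx
      rw [abs_of_pos hx, ← Real.rpow_mul hx.le]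
      congr 1
      field_simp
    have hold2 := holder_aux hconj2
      (f := fun x => g' x ^ ((p-1)*(p-1))) (h := fun x => g' x ^ (p*(2-p)))
      (hposx₀a.mono fun x hx => (Real.rpow_pos_of_pos hx _).le)
      (hposx₀a.mono fun x hx => (Real.rpow_pos_of_pos hx _).le)
      hfmeas hhmeas hfint hhint
    have ef : ∫ x in Ioc x₀ a, g' x ^ ((p-1)*(p-1)) * g' x ^ (p*(2-p)) = s/2 := by
      rw [← hSint]
      apply integral_congr_ae
      filter_upwards [hposx₀a] with x hx
      rw [← Real.rpow_add hx, show (p-1)*(p-1)+p*(2-p) = 1 from by ring, Real.rpow_one]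
    have eJ : ∫ x in Ioc x₀ a, (g' x ^ ((p-1)*(p-1))) ^ ((1:ℝ)/(p-1)) = J := by
      rw [hJ_def]
      apply integral_congr_ae
      filter_upwards [hposx₀a] with x hx
      rw [← Real.rpow_mul hx.le]
      congr 1
      field_simp
    have eT : ∫ x in Ioc x₀ a, (g' x ^ (p*(2-p))) ^ ((1:ℝ)/(2-p))
        = ∫ x in Ioc x₀ a, |g' x|^p := by
      apply integral_congr_ae
      filter_upwards [hposx₀a] with x hx
      rw [abs_of_pos hx, ← Real.rpow_mul hx.le]
      congr 1
      field_simp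
    rw [ef, eJ, eT, one_div_one_div, one_div_one_div] at hold2
    have hT'nn : 0 ≤ ∫ x in Ioc x₀ a, |g' x|^p :=
      setIntegral_nonneg measurableSet_Ioc fun x _ => Real.rpow_nonneg (abs_nonneg _) _
    have hT'le : ∫ x in Ioc x₀ a, |g' x|^p ≤ T :=
      setIntegral_mono_set hg'Lp
        (Eventually.of_forall fun x => Real.rpow_nonneg (abs_nonneg _) _)
        (HasSubset.Subset.eventuallyLE (Ioc_subset_Ioc_left hx₀0.le))
    have hold3 : s/2 ≤ J^(p-1) * T^(2-p) :=
      le_trans hold2 (mul_le_mul_of_nonneg_left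
        (Real.rpow_le_rpow hT'nn hT'le h2p.le) (Real.rpow_nonneg hJnn _))
    have hJlowB : ((s/2) * T^(p-2)) ^ ((1:ℝ)/(p-1)) ≤ J := by
      have h1 : (s/2) * T^(p-2) ≤ J^(p-1) := by
        have hT2 : T^(p-2:ℝ) = (T^(2-p:ℝ))⁻¹ := by
          rw [show (p-2:ℝ) = -(2-p) from by ring, Real.rpow_neg hTpos.le]
        rw [hT2, mul_inv_le_iff₀ (Real.rpow_pos_of_pos hTpos _)]
        linarith
      calc ((s/2) * T^(p-2)) ^ ((1:ℝ)/(p-1)) ≤ (J^(p-1)) ^ ((1:ℝ)/(p-1)) :=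
            Real.rpow_le_rpow
              (mul_nonneg (by linarith) (Real.rpow_nonneg hTpos.le _)) h1
              (by positivity)
        _ = J := by
            rw [← Real.rpow_mul hJnn, show (p-1)*((1:ℝ)/(p-1)) = 1 from by field_simp,
              Real.rpow_one]
    set σ := (s/2:ℝ) ^ (p/(p-1)) with hσ_def
    have hσpos : (0:ℝ) < σ := Real.rpow_pos_of_pos (by linarith) _
    have hpp : p/(p-1) = 1 + 1/(p-1) := by field_simp; ring
    have hK : (s/2) * ((s/2)*T^(p-2)) ^ ((1:ℝ)/(p-1)) = σ * t^(p*(p-2)/(p-1)) := by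
      rw [Real.mul_rpow (by linarith : (0:ℝ) ≤ s/2) (Real.rpow_nonneg hTpos.le _),
        ← Real.rpow_mul hTpos.le, ← htp, ← Real.rpow_mul htpos.le,
        show p*((p-2)*((1:ℝ)/(p-1))) = p*(p-2)/(p-1) from by ring,
        hσ_def, hpp, Real.rpow_add (by linarith : (0:ℝ) < s/2), Real.rpow_one]
      ring
    have hXσ : X = σ * t ^ (-(p/(p-1))) := by
      rw [hX_def, show s/(2*t) = (s/2)/t from by ring,
        Real.div_rpow (by linarith) htpos.le, Real.rpow_neg htpos.le, hσ_def,
        div_eq_mul_inv]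
    have hexp_le : -(p/(p-1)) ≤ p*(p-2)/(p-1) := by
      rw [show -(p/(p-1)) = (-p)/(p-1) from by ring, div_le_div_iff₀ hp1 hp1]
      have hring : p*(p-2)*(p-1) = (p*(p-1))*(p-1) - p*(p-1) := by ring
      have h1 : 0 ≤ p*(p-1) := mul_nonneg hp0.le hp1.le
      have h2 : 0 ≤ (p*(p-1))*(p-1) := mul_nonneg h1 hp1.le
      have hring2 : -p*(p-1) = -(p*(p-1)) := by ring
      linarith
    have hchain : X * (σ * t^(p*(p-2)/(p-1))) ≤ x₀*(s/2)*J := by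
      rw [← hK]
      calc X * ((s/2) * ((s/2)*T^(p-2))^((1:ℝ)/(p-1))) ≤ x₀ * ((s/2)*J) := by
            apply mul_le_mul hXx₀ (mul_le_mul_of_nonneg_left hJlowB (by linarith))
              (mul_nonneg (by linarith)
                (Real.rpow_nonneg (mul_nonneg (by linarith) (Real.rpow_nonneg hTpos.le _)) _))
              hx₀0.le
        _ = x₀*(s/2)*J := by ring
    apply hreduce
    refine le_trans ?_ hchain
    simp only [Mfun]
    rw [if_pos hp2]
    have hepos : (0:ℝ) ≤ p/(p-1) := div_nonneg hp0.le hp1.le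
    have hcp1 : c^(p-1) ≤ 1 := Real.rpow_le_one hc0.le hc1.le hp1.le
    have hcpnn : (0:ℝ) ≤ c^(p-1) := (Real.rpow_pos_of_pos hc0 _).le
    rcases le_total 1 t with hte | hte
    · -- t ≥ 1
      have hbX : b0 p a s t ≤ X :=
        le_trans hb2 (mul_le_of_le_one_left hXpos.le
          (Real.rpow_le_one hc0.le hc1.le hepos))
      have hXX : X ≤ σ * t^(p*(p-2)/(p-1)) := by
        rw [hXσ]
        exact mul_le_mul_of_nonneg_left
          (Real.rpow_le_rpow_of_exponent_le hte hexp_le) hσpos.le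
      calc c^(p-1) * min (b0 p a s t ^ 2 / 2) (b0 p a s t / 2 * s ^ (p/(p-1)))
          ≤ 1 * (b0 p a s t ^ 2 / 2) := by
            apply mul_le_mul hcp1 (min_le_left _ _) _ zero_le_one
            exact le_min (by positivity)
              (mul_nonneg (by linarith) (Real.rpow_nonneg hspos.le _))
        _ = b0 p a s t ^ 2 / 2 := by ring
        _ ≤ X^2 := by
            have := pow_le_pow_left₀ hb0pos.le hbX 2
            have hX2 : (0:ℝ) ≤ X^2 := sq_nonneg X
            linarith
        _ = X * X := sq X
        _ ≤ X * (σ * t^(p*(p-2)/(p-1))) := mul_le_mul_of_nonneg_left hXX hXpos.le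
    · -- t ≤ 1
      have ht1 : (1:ℝ) ≤ t ^ (p*(p-2)/(p-1)) := by
        have hnum : p*(p-2) ≤ 0 := by
          have h1 : 0 ≤ p*(2-p) := mul_nonneg hp0.le h2p.le
          have h2 : p*(p-2) = -(p*(2-p)) := by ring
          linarith
        have he : p*(p-2)/(p-1) ≤ 0 := div_nonpos_of_nonpos_of_nonneg hnum hp1.le
        have := Real.rpow_le_rpow_of_nonpos htpos hte he
        rwa [Real.one_rpow] at this
      have hchalf : c ≤ 1/2 := by rw [hc_def, div_le_iff₀ hp0]; linarith
      have h1 : c^(p/(p-1)) ≤ (1/2:ℝ)^(p/(p-1)) :=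
        Real.rpow_le_rpow hc0.le hchalf hepos
      have hσ2 : σ = s^(p/(p-1)) * (1/2:ℝ)^(p/(p-1)) := by
        rw [hσ_def, show (s/2:ℝ) = s * (1/2) from by ring,
          Real.mul_rpow hspos.le (by norm_num)]
      have hhalfnn : (0:ℝ) ≤ (1/2:ℝ)^(p/(p-1)) := Real.rpow_nonneg (by norm_num) _
      calc c^(p-1) * min (b0 p a s t ^ 2 / 2) (b0 p a s t / 2 * s ^ (p/(p-1)))
          ≤ c^(p-1) * (b0 p a s t / 2 * s ^ (p/(p-1))) :=
            mul_le_mul_of_nonneg_left (min_le_right _ _) hcpnn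
        _ ≤ c^(p-1) * ((c^(p/(p-1))*X)/2 * s ^ (p/(p-1))) := by
            apply mul_le_mul_of_nonneg_left _ hcpnn
            apply mul_le_mul_of_nonneg_right _ (Real.rpow_nonneg hspos.le _)
            linarith [hb2]
        _ = (c^(p-1) * c^(p/(p-1)) * (1/2)) * (X * s^(p/(p-1))) := by ring
        _ ≤ ((1/2:ℝ)^(p/(p-1))) * (X * s^(p/(p-1))) := by
            apply mul_le_mul_of_nonneg_right _
              (mul_nonneg hXpos.le (Real.rpow_nonneg hspos.le _))
            calc c^(p-1) * c^(p/(p-1)) * (1/2)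
                ≤ 1 * (1/2:ℝ)^(p/(p-1)) * 1 := by
                  apply mul_le_mul _ (by norm_num) (by norm_num) _
                  · exact mul_le_mul hcp1 h1 (Real.rpow_pos_of_pos hc0 _).le zero_le_one
                  · exact mul_nonneg zero_le_one hhalfnn
              _ = (1/2:ℝ)^(p/(p-1)) := by ring
        _ = X * σ := by rw [hσ2]; ring
        _ ≤ (X * σ) * t^(p*(p-2)/(p-1)) :=
            le_mul_of_one_le_right (mul_nonneg hXpos.le hσpos.le) ht1
        _ = X * (σ * t^(p*(p-2)/(p-1))) := by ring
  · -- case 2 ≤ p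
    have hp2' : 2 ≤ p := not_lt.mp hp2
    set L := a - x₀ with hL_def
    have hL0 : 0 < L := by rw [hL_def]; linarith
    have hLa : L ≤ a := by rw [hL_def]; linarith
    set m := (s/2)/L with hm_def
    have hm0 : 0 < m := div_pos (by linarith) hL0
    have hLm : L * m = s/2 := by rw [hm_def]; field_simp
    have haff : ∫ x in Ioc x₀ a, (m^(p-1) + (p-1)*m^(p-2)*(g' x - m)) = L * m^(p-1) := by
      have hfe : ∀ x : ℝ, m^(p-1) + (p-1)*m^(p-2)*(g' x - m)
          = (m^(p-1) - (p-1)*m^(p-2)*m) + ((p-1)*m^(p-2)) * g' x := fun x => by ring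
      simp only [hfe]
      rw [integral_add (integrable_const _) (hsub'.const_mul _),
        MeasureTheory.integral_const_mul, hSint, setIntegral_const]
      simp only [smul_eq_mul, measureReal_def, Real.volume_Ioc,
        ENNReal.toReal_ofReal (by linarith : (0:ℝ) ≤ a - x₀)]
      rw [show a - x₀ = L from rfl, ← hLm]
      ring
    have hJlow : L * m^(p-1) ≤ J := by
      rw [← haff, hJ_def]
      apply integral_mono_ae
        ((integrable_const _).add ((hsub'.sub (integrable_const _)).const_mul _)) hJsub
      filter_upwards [hposx₀a] with x hx
      have htan := tangent_aux hx hm0 (by linarith : (1:ℝ) ≤ p - 1)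
      rw [show p - 1 - 1 = p - 2 from by ring] at htan
      exact htan
    have hJ2 : a^(2-p) * (s/2)^(p-1) ≤ J := by
      have heq : L * m^(p-1) = L^(2-p) * (s/2)^(p-1) := by
        have hm' : m^(p-1) = (s/2)^(p-1) / L^(p-1) := by
          rw [hm_def]; exact Real.div_rpow (by linarith) hL0.le _
        have hL2p : L^(2-p) = L / L^(p-1) := by
          rw [show (2-p:ℝ) = 1 - (p-1) from by ring, Real.rpow_sub hL0, Real.rpow_one]
        rw [hm', hL2p]; ring
      refine le_trans ?_ hJlow
      rw [heq]
      exact mul_le_mul_of_nonneg_right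
        (Real.rpow_le_rpow_of_nonpos hL0 hLa (by linarith))
        (Real.rpow_nonneg (by linarith) _)
    -- Mfun bound
    have hsp : (0:ℝ) < s^p := Real.rpow_pos_of_pos hspos _
    have hb1 : b0 p a s t ^ (p-1) ≤ (a/2)^(p-2) * (c^(p/(p-1)) * X) := by
      have hsplit : b0 p a s t ^ (p-1) = b0 p a s t ^ (p-2) * b0 p a s t := by
        rw [show (p-1:ℝ) = (p-2)+1 from by ring, Real.rpow_add_one hb0pos.ne']
      rw [hsplit]
      exact mul_le_mul (Real.rpow_le_rpow hb0pos.le hb_a2 (by linarith)) hb2 hb0pos.le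
        (Real.rpow_nonneg (by linarith) _)
    have hcE : c^(p-1) * c^(p/(p-1)) ≤ 1/2 := by
      rw [← Real.rpow_add hc0]; exact cpow_le_half hp2'
    have hα1 : a^(p-2) ≤ 1 := Real.rpow_le_one ha0.le ha1.le (by linarith)
    have hα0 : (0:ℝ) < a^(p-2) := Real.rpow_pos_of_pos ha0 _
    have hβ0 : (0:ℝ) < (2:ℝ)^(p-2) := Real.rpow_pos_of_pos two_pos _
    have hγ0 : (0:ℝ) < c^(p-1) * c^(p/(p-1)) :=
      mul_pos (Real.rpow_pos_of_pos hc0 _) (Real.rpow_pos_of_pos hc0 _)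
    have h4 : (2:ℝ)^(2:ℝ) = 4 := by
      rw [show (2:ℝ) = ((2:ℕ):ℝ) from by norm_num, Real.rpow_natCast]
      norm_num
    have h2p : (2:ℝ)^p = 2^(p-2)*4 := by
      rw [show (2:ℝ)^p = 2^((p-2)+2) from by norm_num, Real.rpow_add two_pos, h4]
    have ha2 : (a/2:ℝ)^(p-2) = a^(p-2)/2^(p-2) := Real.div_rpow ha0.le (by norm_num) _
    have hs2 : (s/2) * (s/2)^(p-1) = (s/2)^p := by
      nth_rewrite 1 [show (s/2) = (s/2)^(1:ℝ) from (Real.rpow_one _).symm]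
      rw [← Real.rpow_add (by linarith : (0:ℝ) < s/2), show (1:ℝ)+(p-1) = p from by ring]
    have hsp2 : (s/2:ℝ)^p = s^p/2^p := Real.div_rpow hspos.le (by norm_num) _
    have ha2p1 : (1:ℝ) ≤ a^(2-p) := by
      have := Real.rpow_le_rpow_of_exponent_ge ha0 ha1.le (by linarith : 2-p ≤ (0:ℝ))
      rwa [Real.rpow_zero] at this
    have hRHS : X*(s/2)*(a^(2-p)*(s/2)^(p-1)) = X*a^(2-p)*(s^p/2^p) := by
      calc X*(s/2)*(a^(2-p)*(s/2)^(p-1)) = X*a^(2-p)*((s/2)*(s/2)^(p-1)) := by ring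
        _ = X*a^(2-p)*(s^p/2^p) := by rw [hs2, hsp2]
    have hkey : c^(p-1) * c^(p/(p-1)) * a^(p-2) ≤ 1/2 :=
      le_trans (mul_le_of_le_one_right hγ0.le hα1) hcE
    have hfinal : (1/2)*c^(p-1)*((a/2)^(p-2)*(c^(p/(p-1))*X))*s^p
        ≤ X * (s/2) * (a^(2-p) * (s/2)^(p-1)) := by
      rw [hRHS, ha2]
      calc (1/2)*c^(p-1)*((a^(p-2)/2^(p-2))*(c^(p/(p-1))*X))*s^p
          = (c^(p-1)*c^(p/(p-1))*a^(p-2)) * (X*s^p/(2*(2:ℝ)^(p-2))) := by ring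
        _ ≤ (1/2) * (X*s^p/(2*(2:ℝ)^(p-2))) := by
            apply mul_le_mul_of_nonneg_right hkey
            exact div_nonneg (mul_nonneg hXpos.le hsp.le) (by linarith)
        _ = X * 1 * (s^p/2^p) := by rw [h2p]; ring
        _ ≤ X * a^(2-p) * (s^p/2^p) := by
            apply mul_le_mul_of_nonneg_right
              (mul_le_mul_of_nonneg_left ha2p1 hXpos.le)
            exact div_nonneg hsp.le (Real.rpow_pos_of_pos two_pos _).le
    apply hreduce
    simp only [Mfun]
    rw [if_neg hp2]
    calc (1/2)*c^(p-1)*(b0 p a s t)^(p-1)*s^p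
        ≤ (1/2)*c^(p-1)*((a/2)^(p-2)*(c^(p/(p-1))*X))*s^p := by
          apply mul_le_mul_of_nonneg_right _ hsp.le
          apply mul_le_mul_of_nonneg_left hb1
          exact mul_nonneg (by norm_num) (Real.rpow_pos_of_pos hc0 _).le
      _ ≤ X * (s/2) * (a^(2-p) * (s/2)^(p-1)) := hfinal
      _ ≤ X * (s/2) * J := by
          apply mul_le_mul_of_nonneg_left hJ2
          exact mul_nonneg hXpos.le (by linarith)
      _ ≤ x₀ * (s/2) * J := by
          apply mul_le_mul_of_nonneg_right _ hJnn
          exact mul_le_mul_of_nonneg_right hXx₀ (by linarith)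
end

section
/- Let p ∈ (1,∞), let f : (0,1) → (0,1] be measurable, and let u ∈ L^∞(0,1) satisfy ∫₀¹ f·|u|^p = 1 and ∫₀¹ f·|u|^{p−2}u = 0. Then ∫₀¹ (u⁺)^{p−1} ≥ 1/(2‖u‖_∞) and ∫₀¹ (u⁻)^{p−1} ≥ 1/(2‖u‖_∞). -/
open MeasureTheory Set Filter Topology

lemma aux19 (p : ℝ) (hp : 1 < p) (f u : ℝ → ℝ)
    (hfmeas : Measurable f)
    (hf : ∀ x ∈ Set.Ioo (0 : ℝ) 1, f x ∈ Set.Ioc (0 : ℝ) 1)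
    (hu : MemLp u ⊤ (volume.restrict (Set.Ioo (0 : ℝ) 1)))
    (hnorm : (∫ x in Set.Ioo (0 : ℝ) 1, f x * |u x| ^ p) = 1)
    (hzero : (∫ x in Set.Ioo (0 : ℝ) 1, f x * |u x| ^ (p - 2) * u x) = 0) :
    (∫ x in Set.Ioo (0 : ℝ) 1, max (u x) 0 ^ (p - 1)) ≥
        1 / (2 * (eLpNorm u ⊤ (volume.restrict (Set.Ioo (0 : ℝ) 1))).toReal) := by
  set μ := volume.restrict (Set.Ioo (0 : ℝ) 1) with hμdef
  set M := (eLpNorm u ⊤ μ).toReal with hMdef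
  haveI : IsFiniteMeasure μ := by
    constructor
    rw [hμdef, Measure.restrict_apply_univ]
    simp [Real.volume_Ioo]
  have hp1 : (0:ℝ) ≤ p - 1 := by linarith
  have hp1' : p - 1 ≠ 0 := by linarith
  have hgPnonneg : ∀ x, (0:ℝ) ≤ max (u x) 0 ^ (p-1) :=
    fun x => Real.rpow_nonneg (le_max_right _ _) _
  have hgNnonneg : ∀ x, (0:ℝ) ≤ max (-u x) 0 ^ (p-1) :=
    fun x => Real.rpow_nonneg (le_max_right _ _) _
  by_cases hM0 : M = 0
  · rw [hM0]
    norm_num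
    exact integral_nonneg hgPnonneg
  have hMpos : 0 < M := lt_of_le_of_ne ENNReal.toReal_nonneg (Ne.symm hM0)
  -- a.e. bound
  have hae : ∀ᵐ x ∂μ, |u x| ≤ M := by
    filter_upwards [ae_le_eLpNormEssSup (f := u) (μ := μ)] with x hx
    have h1 : (‖u x‖₊ : ENNReal) ≤ eLpNorm u ⊤ μ := by rwa [eLpNorm_exponent_top]
    have h2 := ENNReal.toReal_mono hu.2.ne h1
    simpa [Real.norm_eq_abs, hMdef] using h2
  have haemem : ∀ᵐ x ∂μ, x ∈ Set.Ioo (0:ℝ) 1 := by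
    rw [hμdef]; exact ae_restrict_mem measurableSet_Ioo
  -- measurability
  have humeas : AEMeasurable u μ := hu.aestronglyMeasurable.aemeasurable
  have hrpow_cont : Continuous (fun y : ℝ => y ^ (p-1)) := Real.continuous_rpow_const hp1
  have hgPmeas : AEMeasurable (fun x => max (u x) 0 ^ (p-1)) μ :=
    hrpow_cont.measurable.comp_aemeasurable (humeas.max aemeasurable_const)
  have hgNmeas : AEMeasurable (fun x => max (-u x) 0 ^ (p-1)) μ :=
    hrpow_cont.measurable.comp_aemeasurable (humeas.neg.max aemeasurable_const)
  have hppow_cont : Continuous (fun y : ℝ => y ^ p) :=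
    Real.continuous_rpow_const (by linarith)
  have habsmeas : AEMeasurable (fun x => |u x| ^ p) μ :=
    (hppow_cont.comp continuous_abs).measurable.comp_aemeasurable humeas
  -- integrability helper
  have hint : ∀ (g : ℝ → ℝ) (C : ℝ), AEMeasurable g μ → (∀ᵐ x ∂μ, ‖g x‖ ≤ C) →
      Integrable g μ := fun g C hg hbd =>
    (memLp_top_of_bound hg.aestronglyMeasurable C hbd).integrable le_top
  have hboundP : ∀ᵐ x ∂μ, ‖max (u x) 0 ^ (p-1)‖ ≤ M ^ (p-1) := by
    filter_upwards [hae] with x hx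
    rw [Real.norm_eq_abs, abs_of_nonneg (hgPnonneg x)]
    exact Real.rpow_le_rpow (le_max_right _ _)
      (max_le (le_trans (le_abs_self _) hx) hMpos.le) hp1
  have hboundN : ∀ᵐ x ∂μ, ‖max (-u x) 0 ^ (p-1)‖ ≤ M ^ (p-1) := by
    filter_upwards [hae] with x hx
    rw [Real.norm_eq_abs, abs_of_nonneg (hgNnonneg x)]
    refine Real.rpow_le_rpow (le_max_right _ _)
      (max_le (le_trans (le_abs_self _) ?_) hMpos.le) hp1
    rwa [abs_neg]
  have hint_gP : Integrable (fun x => max (u x) 0 ^ (p-1)) μ :=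
    hint _ _ hgPmeas hboundP
  have hf_ae : ∀ᵐ x ∂μ, f x ∈ Set.Ioc (0:ℝ) 1 := by
    filter_upwards [haemem] with x hx using hf x hx
  have hint_fgP : Integrable (fun x => f x * max (u x) 0 ^ (p-1)) μ := by
    refine hint _ (M ^ (p-1)) (hfmeas.aemeasurable.mul hgPmeas) ?_
    filter_upwards [hboundP, hf_ae] with x hb hfx
    rw [norm_mul]
    calc ‖f x‖ * ‖max (u x) 0 ^ (p-1)‖ ≤ 1 * (M ^ (p-1)) := by
          refine mul_le_mul ?_ hb (norm_nonneg _) zero_le_one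
          rw [Real.norm_eq_abs, abs_of_pos hfx.1]; exact hfx.2
      _ = M ^ (p-1) := one_mul _
  have hint_fgN : Integrable (fun x => f x * max (-u x) 0 ^ (p-1)) μ := by
    refine hint _ (M ^ (p-1)) (hfmeas.aemeasurable.mul hgNmeas) ?_
    filter_upwards [hboundN, hf_ae] with x hb hfx
    rw [norm_mul]
    calc ‖f x‖ * ‖max (-u x) 0 ^ (p-1)‖ ≤ 1 * (M ^ (p-1)) := by
          refine mul_le_mul ?_ hb (norm_nonneg _) zero_le_one
          rw [Real.norm_eq_abs, abs_of_pos hfx.1]; exact hfx.2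
      _ = M ^ (p-1) := one_mul _
  have hint_fu : Integrable (fun x => f x * |u x| ^ p) μ := by
    refine hint _ (M ^ p) (hfmeas.aemeasurable.mul habsmeas) ?_
    filter_upwards [hae, hf_ae] with x hx hfx
    rw [norm_mul]
    calc ‖f x‖ * ‖|u x| ^ p‖ ≤ 1 * (M ^ p) := by
          refine mul_le_mul ?_ ?_ (norm_nonneg _) zero_le_one
          · rw [Real.norm_eq_abs, abs_of_pos hfx.1]; exact hfx.2
          · rw [Real.norm_eq_abs, abs_of_nonneg (Real.rpow_nonneg (abs_nonneg _) _)]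
            exact Real.rpow_le_rpow (abs_nonneg _) hx (by linarith)
      _ = M ^ p := one_mul _
  -- pointwise identities
  have habs : ∀ x, |u x| ^ (p-1) = max (u x) 0 ^ (p-1) + max (-u x) 0 ^ (p-1) := by
    intro x
    rcases le_or_gt (u x) 0 with h | h
    · rw [abs_of_nonpos h, max_eq_right h, max_eq_left (neg_nonneg.2 h),
        Real.zero_rpow hp1', zero_add]
    · rw [abs_of_pos h, max_eq_left h.le, max_eq_right (neg_nonpos.2 h.le),
        Real.zero_rpow hp1', add_zero]
  have hsgn : ∀ x, |u x| ^ (p-2) * u x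
      = max (u x) 0 ^ (p-1) - max (-u x) 0 ^ (p-1) := by
    intro x
    rcases lt_trichotomy (u x) 0 with h | h | h
    · have hne : -u x ≠ 0 := ne_of_gt (by linarith)
      rw [abs_of_neg h, max_eq_right h.le, max_eq_left (neg_nonneg.2 h.le),
        Real.zero_rpow hp1', show p - 1 = (p-2) + 1 by ring, Real.rpow_add_one hne]
      ring
    · simp [h, Real.zero_rpow hp1']
    · have hne : u x ≠ 0 := ne_of_gt h
      rw [abs_of_pos h, max_eq_left h.le, max_eq_right (neg_nonpos.2 h.le),
        Real.zero_rpow hp1', show p - 1 = (p-2) + 1 by ring, Real.rpow_add_one hne]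
      ring
  -- equality of the two signed integrals
  have h2 : (∫ x, f x * max (u x) 0 ^ (p-1) ∂μ)
      = ∫ x, f x * max (-u x) 0 ^ (p-1) ∂μ := by
    have hz : ∫ x, (f x * max (u x) 0 ^ (p-1) - f x * max (-u x) 0 ^ (p-1)) ∂μ
        = ∫ x, f x * |u x| ^ (p-2) * u x ∂μ := by
      refine integral_congr_ae (Filter.Eventually.of_forall fun x => ?_)
      dsimp only
      rw [mul_assoc, hsgn x]; ring
    rw [integral_sub hint_fgP hint_fgN, hzero] at hz
    linarith
  -- pointwise a.e. inequality
  have hptwise : ∀ᵐ x ∂μ, f x * |u x| ^ p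
      ≤ M * (f x * max (u x) 0 ^ (p-1) + f x * max (-u x) 0 ^ (p-1)) := by
    filter_upwards [hae, hf_ae] with x hx hfx
    have h1 : |u x| ^ p ≤ M * |u x| ^ (p-1) := by
      by_cases hz : u x = 0
      · simp [hz, Real.zero_rpow (show p ≠ 0 by linarith), Real.zero_rpow hp1']
      · have habspos : (0:ℝ) < |u x| := abs_pos.2 hz
        calc |u x| ^ p = |u x| ^ (p-1) * |u x| := by
              rw [← Real.rpow_add_one habspos.ne' (p-1)]
              congr 1
              ring
          _ ≤ |u x| ^ (p-1) * M :=
              mul_le_mul_of_nonneg_left hx (Real.rpow_nonneg (abs_nonneg _) _)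
          _ = M * |u x| ^ (p-1) := mul_comm _ _
    calc f x * |u x| ^ p ≤ f x * (M * |u x| ^ (p-1)) :=
          mul_le_mul_of_nonneg_left h1 hfx.1.le
      _ = M * (f x * max (u x) 0 ^ (p-1) + f x * max (-u x) 0 ^ (p-1)) := by
          rw [habs x]; ring
  have h3 : (∫ x, f x * |u x| ^ p ∂μ) ≤ M * ((∫ x, f x * max (u x) 0 ^ (p-1) ∂μ)
      + ∫ x, f x * max (-u x) 0 ^ (p-1) ∂μ) := by
    calc (∫ x, f x * |u x| ^ p ∂μ)
        ≤ ∫ x, M * (f x * max (u x) 0 ^ (p-1) + f x * max (-u x) 0 ^ (p-1)) ∂μ :=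
          integral_mono_ae hint_fu ((hint_fgP.add hint_fgN).const_mul M) hptwise
      _ = M * ((∫ x, f x * max (u x) 0 ^ (p-1) ∂μ)
          + ∫ x, f x * max (-u x) 0 ^ (p-1) ∂μ) := by
          rw [integral_const_mul, integral_add hint_fgP hint_fgN]
  have h4 : (∫ x, f x * max (u x) 0 ^ (p-1) ∂μ)
      ≤ ∫ x, max (u x) 0 ^ (p-1) ∂μ := by
    refine integral_mono_ae hint_fgP hint_gP ?_
    filter_upwards [hf_ae] with x hfx
    exact mul_le_of_le_one_left (hgPnonneg x) hfx.2
  rw [ge_iff_le, div_le_iff₀ (by positivity)]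
  nlinarith [h2, h3, h4, hnorm]

/-- estimate (4.21) in Step 2 of the proof of Proposition 4.1: if
`f : (0,1) → (0,1]` is measurable and `u ∈ L^∞(0,1)` satisfies `∫₀¹ f|u|^p = 1` and
`∫₀¹ f|u|^{p-2}u = 0`, then `∫₀¹ (u⁺)^{p-1} ≥ 1/(2‖u‖_∞)` and
`∫₀¹ (u⁻)^{p-1} ≥ 1/(2‖u‖_∞)`. -/
theorem stmt19 (p : ℝ) (hp : 1 < p) (f u : ℝ → ℝ)
    (hfmeas : Measurable f)
    (hf : ∀ x ∈ Set.Ioo (0 : ℝ) 1, f x ∈ Set.Ioc (0 : ℝ) 1)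
    (hu : MemLp u ⊤ (volume.restrict (Set.Ioo (0 : ℝ) 1)))
    (hnorm : (∫ x in Set.Ioo (0 : ℝ) 1, f x * |u x| ^ p) = 1)
    (hzero : (∫ x in Set.Ioo (0 : ℝ) 1, f x * |u x| ^ (p - 2) * u x) = 0) :
    (∫ x in Set.Ioo (0 : ℝ) 1, max (u x) 0 ^ (p - 1)) ≥
        1 / (2 * (eLpNorm u ⊤ (volume.restrict (Set.Ioo (0 : ℝ) 1))).toReal) ∧
    (∫ x in Set.Ioo (0 : ℝ) 1, max (-u x) 0 ^ (p - 1)) ≥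
        1 / (2 * (eLpNorm u ⊤ (volume.restrict (Set.Ioo (0 : ℝ) 1))).toReal) := by
  refine ⟨aux19 p hp f u hfmeas hf hu hnorm hzero, ?_⟩
  have h := aux19 p hp f (fun x => -u x) hfmeas hf hu.neg ?_ ?_
  · have he : eLpNorm (fun x => -u x) ⊤ (volume.restrict (Set.Ioo (0:ℝ) 1))
        = eLpNorm u ⊤ (volume.restrict (Set.Ioo (0:ℝ) 1)) := eLpNorm_neg u ⊤ _
    rwa [he] at h
  · simp only [abs_neg]; exact hnorm
  · simp only [abs_neg, mul_neg]
    rw [integral_neg, hzero, neg_zero]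
end
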